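/- Let f : [0,1] → [0,∞) satisfy f(p) = f(1−p) for all p ∈ [0,1], with p ↦ f(p)/p non-increasing on (0,1]. Let 0 ≤ p_1 ≤ … ≤ p_m ≤ 1, let 1 ≤ i ≤ k ≤ m−1. Then (p_i − p_{k+1})·C_f(m−k−1; p_{−(i,k+1)}) + p_{k+1}·C_f(m−k−1; p_{−(k+1)}) − p_i·C_f(m−k−1; p_{−i}) ≤ p_{k+1}·f(p_i) − p_i·f(p_{k+1}), where p_{−(i,k+1)} denotes the list with both entries i and k+1 removed. -/

import Mathlib

/-- The optimal expected cost `C_f(θ; p)` of sequentially computing the Boolean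
threshold function `Π_θ` on independent Bernoulli variables with parameters given by
the list `p`, where querying a node with parameter `q` costs `f q`.
`cost f θ p = 0` if `θ = 0` or `θ > p.length`, and otherwise it is the minimum over
nodes `i` of `f p_i + p_i • cost f (θ-1) p_{-i} + (1 - p_i) • cost f θ p_{-i}`. -/
noncomputable def cost (f : ℝ → ℝ) : ℕ → List ℝ → ℝ
  | 0, _ => 0
  | (θ+1), p =>
      if p.length < θ + 1 then 0
      else ⨅ i : Fin p.length,
        (f (p.get i) + p.get i * cost f θ (p.eraseIdx i.1)
          + (1 - p.get i) * cost f (θ+1) (p.eraseIdx i.1))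
termination_by θ p => p.length
decreasing_by
  all_goals (have h := i.isLt; simp [List.length_eraseIdx, h]; omega)

/-! ### Auxiliary list lemmas -/

lemma getElem_idx_congr {l : List ℝ} {i j : ℕ} (h : i = j) (hj : j < l.length) :
    l[i]'(by omega) = l[j] := by subst h; rfl

lemma eraseIdx_comm' {α : Type} (l : List α) (i j : ℕ) (hij : i ≤ j) (hj : j + 1 < l.length) :
    (l.eraseIdx (j+1)).eraseIdx i = (l.eraseIdx i).eraseIdx j := by
  have L1 : (l.eraseIdx (j+1)).length = l.length - 1 := by
    rw [List.length_eraseIdx, if_pos hj]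
  have L2 : (l.eraseIdx i).length = l.length - 1 := by
    rw [List.length_eraseIdx, if_pos (by omega)]
  have L3 : ((l.eraseIdx (j+1)).eraseIdx i).length = l.length - 2 := by
    rw [List.length_eraseIdx, if_pos (by omega), L1]; omega
  have L4 : ((l.eraseIdx i).eraseIdx j).length = l.length - 2 := by
    rw [List.length_eraseIdx, if_pos (by omega), L2]; omega
  apply List.ext_getElem (by omega)
  intro k h1 h2
  have hk : k < l.length - 2 := L3 ▸ h1
  simp only [List.getElem_eraseIdx]
  split_ifs <;> first | rfl | (congr 1; omega) |
    (rw [dif_pos (by omega : k < j)]) | (rw [dif_neg (by omega : ¬ k < j), dif_neg (by omega)])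

def Unit01 (l : List ℝ) : Prop := ∀ x ∈ l, 0 ≤ x ∧ x ≤ 1

lemma Unit01.eraseIdx {l : List ℝ} (h : Unit01 l) (i : ℕ) : Unit01 (l.eraseIdx i) :=
  fun x hx => h x ((List.eraseIdx_sublist l i).subset hx)

lemma Unit01.getD {l : List ℝ} (h : Unit01 l) {j : ℕ} (hj : j < l.length) :
    0 ≤ l.getD j 0 ∧ l.getD j 0 ≤ 1 := by
  rw [List.getD_eq_getElem _ _ hj]
  exact h _ (List.getElem_mem hj)

lemma sorted_eraseIdx {l : List ℝ} (h : l.Pairwise (· ≤ ·)) (i : ℕ) :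
    (l.eraseIdx i).Pairwise (· ≤ ·) :=
  List.Pairwise.sublist (List.eraseIdx_sublist l i) h

lemma sorted_getElem_mono {l : List ℝ} (h : l.Pairwise (· ≤ ·)) {i j : ℕ} (hij : i ≤ j)
    (hj : j < l.length) : l[i]'(by omega) ≤ l[j] := by
  rcases eq_or_lt_of_le hij with rfl | h'
  · exact le_refl _
  · exact List.pairwise_iff_getElem.mp h _ _ _ _ h'

lemma sorted_getD_mono {l : List ℝ} (h : l.Pairwise (· ≤ ·)) {i j : ℕ} (hij : i ≤ j)
    (hj : j < l.length) : l.getD i 0 ≤ l.getD j 0 := by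
  rw [List.getD_eq_getElem _ _ (by omega), List.getD_eq_getElem _ _ hj]
  exact sorted_getElem_mono h hij hj

lemma getD_eraseIdx_lt {l : List ℝ} {i j : ℕ} (hij : j < i) (hj : j < l.length - 1) :
    (l.eraseIdx i).getD j 0 = l.getD j 0 := by
  have h1 : j < (l.eraseIdx i).length := by rw [List.length_eraseIdx]; split <;> omega
  rw [List.getD_eq_getElem _ _ h1, List.getElem_eraseIdx, dif_pos hij, List.getD_eq_getElem]

lemma getD_eraseIdx_ge {l : List ℝ} {i j : ℕ} (hij : i ≤ j) (hj : j < l.length - 1) :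
    (l.eraseIdx i).getD j 0 = l.getD (j+1) 0 := by
  have h1 : j < (l.eraseIdx i).length := by rw [List.length_eraseIdx]; split <;> omega
  rw [List.getD_eq_getElem _ _ h1, List.getElem_eraseIdx, dif_neg (by omega),
    List.getD_eq_getElem]

lemma length_eraseIdx' {l : List ℝ} {i : ℕ} (h : i < l.length) :
    (l.eraseIdx i).length = l.length - 1 := by
  rw [List.length_eraseIdx, if_pos h]

/-! ### Basic cost lemmas -/

/-- the value of querying index `j` first, at threshold `t+1` -/
noncomputable def vAt (f : ℝ → ℝ) (t : ℕ) (q : List ℝ) (j : ℕ) : ℝ :=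
  f (q.getD j 0) + q.getD j 0 * cost f t (q.eraseIdx j)
    + (1 - q.getD j 0) * cost f (t+1) (q.eraseIdx j)

lemma cost_zero (f : ℝ → ℝ) (p : List ℝ) : cost f 0 p = 0 := by rw [cost]

lemma cost_eq_zero_of_lt {f : ℝ → ℝ} {θ : ℕ} {p : List ℝ} (h : p.length < θ) :
    cost f θ p = 0 := by
  cases θ with
  | zero => exact cost_zero f p
  | succ t => rw [cost, if_pos h]

lemma cost_succ_eq_iInf {f : ℝ → ℝ} {θ : ℕ} {p : List ℝ} (h : θ + 1 ≤ p.length) :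
    cost f (θ+1) p = ⨅ i : Fin p.length, vAt f θ p i := by
  rw [cost, if_neg (by omega)]
  congr 1; funext i
  simp [vAt, List.getD_eq_getElem, i.isLt, List.get_eq_getElem]

lemma cost_le_vAt {f : ℝ → ℝ} {θ : ℕ} {q : List ℝ} (h : θ + 1 ≤ q.length)
    {j : ℕ} (hj : j < q.length) : cost f (θ+1) q ≤ vAt f θ q j := by
  rw [cost_succ_eq_iInf h]
  exact ciInf_le (Finite.bddBelow_range _) (⟨j, hj⟩ : Fin q.length)

lemma cost_eq_vAt {f : ℝ → ℝ} {θ : ℕ} {q : List ℝ} (h : θ + 1 ≤ q.length)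
    {j : ℕ} (hj : j < q.length) (hmin : ∀ j' : ℕ, j' < q.length → vAt f θ q j ≤ vAt f θ q j') :
    cost f (θ+1) q = vAt f θ q j := by
  refine le_antisymm (cost_le_vAt h hj) ?_
  rw [cost_succ_eq_iInf h]
  have : Nonempty (Fin q.length) := ⟨⟨j, hj⟩⟩
  exact le_ciInf fun i => hmin i i.isLt

lemma cost_nonneg {f : ℝ → ℝ} (hf : ∀ x ∈ Set.Icc (0:ℝ) 1, 0 ≤ f x) :
    ∀ (n θ : ℕ) (q : List ℝ), q.length ≤ n → Unit01 q → 0 ≤ cost f θ q := by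
  intro n
  induction n with
  | zero =>
    intro θ q hq hu
    cases θ with
    | zero => rw [cost_zero]
    | succ t => rw [cost_eq_zero_of_lt (by omega)]
  | succ n ih =>
    intro θ q hq hu
    cases θ with
    | zero => rw [cost_zero]
    | succ t =>
      by_cases hl : q.length < t + 1
      · rw [cost_eq_zero_of_lt hl]
      · rw [cost_succ_eq_iInf (by omega)]
        refine Real.iInf_nonneg fun i => ?_
        have hmem : q.getD i 0 ∈ q := by
          rw [List.getD_eq_getElem _ _ i.isLt]; exact List.getElem_mem i.isLt
        obtain ⟨h0, h1⟩ := hu _ hmem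
        have hlen : (q.eraseIdx i.1).length ≤ n := by
          rw [List.length_eraseIdx]; simp [i.isLt]; omega
        have c1 := ih t (q.eraseIdx i.1) hlen (hu.eraseIdx _)
        have c2 := ih (t+1) (q.eraseIdx i.1) hlen (hu.eraseIdx _)
        have hfv : 0 ≤ f (q.getD i 0) := hf _ ⟨h0, h1⟩
        unfold vAt
        nlinarith

/-! ### The flip-reverse duality -/

def flipL (l : List ℝ) : List ℝ := (l.map (fun x => 1 - x)).reverse

@[simp] lemma flipL_length (l : List ℝ) : (flipL l).length = l.length := by simp [flipL]

lemma flipL_getElem (l : List ℝ) (k : ℕ) (h : k < (flipL l).length) :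
    (flipL l)[k] = 1 - l[l.length - 1 - k]'(by simp [flipL] at h; omega) := by
  simp only [flipL, List.getElem_reverse, List.getElem_map, List.length_map]

lemma flipL_getD (l : List ℝ) (k : ℕ) (h : k < l.length) :
    (flipL l).getD k 0 = 1 - l.getD (l.length - 1 - k) 0 := by
  rw [List.getD_eq_getElem _ _ (by rw [flipL_length]; omega),
    List.getD_eq_getElem _ _ (by omega), flipL_getElem]

lemma flipL_unit01 {l : List ℝ} (h : Unit01 l) : Unit01 (flipL l) := by
  intro x hx
  simp only [flipL, List.mem_reverse, List.mem_map] at hx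
  obtain ⟨y, hy, rfl⟩ := hx
  obtain ⟨h0, h1⟩ := h y hy
  constructor <;> linarith

lemma flipL_sorted {l : List ℝ} (h : l.Pairwise (· ≤ ·)) : (flipL l).Pairwise (· ≤ ·) := by
  rw [List.pairwise_iff_getElem]
  intro i j hi hj hij
  rw [flipL_getElem _ _ hi, flipL_getElem _ _ hj]
  simp only [flipL_length] at hi hj
  have key := sorted_getElem_mono h (by omega : l.length - 1 - j ≤ l.length - 1 - i)
    (by omega : l.length - 1 - i < l.length)
  linarith

lemma flipL_eraseIdx (l : List ℝ) (i : ℕ) (hi : i < l.length) :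
    flipL (l.eraseIdx i) = (flipL l).eraseIdx (l.length - 1 - i) := by
  have L0 : (l.eraseIdx i).length = l.length - 1 := by
    rw [List.length_eraseIdx, if_pos hi]
  have L1 : ((flipL l).eraseIdx (l.length - 1 - i)).length = l.length - 1 := by
    rw [List.length_eraseIdx, if_pos (by rw [flipL_length]; omega), flipL_length]
  apply List.ext_getElem
  · rw [flipL_length, L0, L1]
  intro k h1 h2
  have hk : k < l.length - 1 := by rw [flipL_length, L0] at h1; exact h1
  have e1 : (flipL (l.eraseIdx i))[k]
      = 1 - (l.eraseIdx i)[(l.eraseIdx i).length - 1 - k]'(by omega) :=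
    flipL_getElem _ _ h1
  rw [e1, List.getElem_eraseIdx, List.getElem_eraseIdx]
  by_cases hc : k < l.length - 1 - i
  · rw [dif_neg (by rw [L0]; omega), dif_pos (by omega)]
    rw [flipL_getElem _ _ (by rw [flipL_length]; omega)]
    exact congrArg (fun z => 1 - z) (getElem_idx_congr (by omega) (by omega))
  · rw [dif_pos (by rw [L0]; omega), dif_neg (by omega)]
    rw [flipL_getElem _ _ (by rw [flipL_length]; omega)]
    exact congrArg (fun z => 1 - z) (getElem_idx_congr (by omega) (by omega))

lemma cost_nil (f : ℝ → ℝ) (θ : ℕ) : cost f θ ([] : List ℝ) = 0 := by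
  cases θ with
  | zero => exact cost_zero f []
  | succ t => exact cost_eq_zero_of_lt (by simp)

lemma cost_dual {f : ℝ → ℝ} (hf_sym : ∀ x ∈ Set.Icc (0:ℝ) 1, f x = f (1 - x)) :
    ∀ (n : ℕ) (q : List ℝ), q.length ≤ n → Unit01 q → ∀ θ : ℕ,
      cost f θ q = cost f (q.length + 1 - θ) (flipL q) := by
  intro n
  induction n with
  | zero =>
    intro q hq hu θ
    have : q = [] := List.length_eq_zero_iff.mp (by omega)
    subst this
    have : flipL ([] : List ℝ) = [] := rfl
    rw [this, cost_nil, cost_nil]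
  | succ n ih =>
    intro q hq hu θ
    cases θ with
    | zero =>
      rw [cost_zero, cost_eq_zero_of_lt (by rw [flipL_length]; omega)]
    | succ t =>
      by_cases hl : q.length < t + 1
      · rw [cost_eq_zero_of_lt hl]
        have : q.length + 1 - (t+1) = 0 := by omega
        rw [this, cost_zero]
      · set L := q.length with hL
        have hLt : t + 1 ≤ L := by omega
        have hmain : ∀ j : ℕ, j < L → vAt f t q j = vAt f (L - t - 1) (flipL q) (L - 1 - j) := by
          intro j hj
          have hjq : j < q.length := by omega
          have ha : q.getD j 0 ∈ Set.Icc (0:ℝ) 1 := by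
            obtain ⟨h0, h1⟩ := hu.getD hjq; exact ⟨h0, h1⟩
          have hgd : (flipL q).getD (L - 1 - j) 0 = 1 - q.getD j 0 := by
            rw [flipL_getD _ _ (by omega)]
            congr 2
            omega
          have hlist : (flipL q).eraseIdx (L - 1 - j) = flipL (q.eraseIdx j) :=
            (flipL_eraseIdx q j hjq).symm
          have hlen' : (q.eraseIdx j).length = L - 1 := length_eraseIdx' hjq
          have hu' : Unit01 (q.eraseIdx j) := hu.eraseIdx j
          have e1 : cost f (t+1) (q.eraseIdx j) = cost f (L - t - 1) (flipL (q.eraseIdx j)) := by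
            have := ih (q.eraseIdx j) (by omega) hu' (t+1)
            rw [hlen'] at this
            have harith : L - 1 + 1 - (t+1) = L - t - 1 := by omega
            rw [harith] at this
            exact this
          have e2 : cost f t (q.eraseIdx j) = cost f (L - t) (flipL (q.eraseIdx j)) := by
            have := ih (q.eraseIdx j) (by omega) hu' t
            rw [hlen'] at this
            have harith : L - 1 + 1 - t = L - t := by omega
            rw [harith] at this
            exact this
          have harith2 : L - t - 1 + 1 = L - t := by omega
          unfold vAt
          rw [hgd, hlist, harith2, ← e1, ← e2, ← hf_sym _ ha]
          ring
        have h2 : L + 1 - (t + 1) = (L - t - 1) + 1 := by omega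
        rw [h2, cost_succ_eq_iInf (by omega), cost_succ_eq_iInf (by rw [flipL_length]; omega)]
        have hne : Nonempty (Fin q.length) := ⟨⟨0, by omega⟩⟩
        have hne2 : Nonempty (Fin (flipL q).length) := ⟨⟨0, by rw [flipL_length]; omega⟩⟩
        apply le_antisymm
        · apply le_ciInf
          intro i
          have hi : (i : ℕ) < L := by simpa using i.isLt
          have key := hmain (L - 1 - i) (by omega)
          have : L - 1 - (L - 1 - (i:ℕ)) = i := by omega
          rw [this] at key
          calc ⨅ i' : Fin q.length, vAt f t q i'
              ≤ vAt f t q (L - 1 - i) := ciInf_le (Finite.bddBelow_range _) (⟨L - 1 - i, by omega⟩ : Fin q.length)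
            _ = vAt f (L - t - 1) (flipL q) i := key
        · apply le_ciInf
          intro i
          have hi : (i : ℕ) < L := by have := i.isLt; omega
          have key := hmain i hi
          calc ⨅ i' : Fin (flipL q).length, vAt f (L - t - 1) (flipL q) i'
              ≤ vAt f (L - t - 1) (flipL q) (L - 1 - i) :=
                ciInf_le (Finite.bddBelow_range _) (⟨L - 1 - i, by rw [flipL_length]; omega⟩ : Fin (flipL q).length)
            _ = vAt f t q i := key.symm


/-! ### The two statements of the loaded induction -/

/-- Part (a): for threshold `t+1` on a sorted list of length `n`, querying position
`n - t - 1` (0-based) first is optimal. -/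
def PA (f : ℝ → ℝ) (n : ℕ) : Prop :=
  ∀ q : List ℝ, q.Pairwise (· ≤ ·) → Unit01 q → q.length = n →
  ∀ t : ℕ, t + 1 ≤ n → ∀ j : ℕ, j < n → vAt f t q (n - t - 1) ≤ vAt f t q j

/-- Part (c): the exchange inequality. -/
def PC (f : ℝ → ℝ) (N : ℕ) : Prop :=
  ∀ r : List ℝ, r.Pairwise (· ≤ ·) → Unit01 r → r.length = N →
  ∀ ia ib θ : ℕ, ia < ib → ib < N → ib + θ ≤ N →
  r.getD ib 0 * cost f θ (r.eraseIdx ib) - r.getD ia 0 * cost f θ (r.eraseIdx ia)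
    - (r.getD ib 0 - r.getD ia 0) * cost f θ ((r.eraseIdx ib).eraseIdx ia)
  ≤ r.getD ib 0 * f (r.getD ia 0) - r.getD ia 0 * f (r.getD ib 0)

lemma costA {f : ℝ → ℝ} {n : ℕ} (hPA : PA f n) {q : List ℝ} (hs : q.Pairwise (· ≤ ·))
    (hu : Unit01 q) (hlen : q.length = n) {t : ℕ} (ht : t + 1 ≤ n) :
    cost f (t+1) q = vAt f t q (n - t - 1) := by
  apply cost_eq_vAt (by omega) (by omega)
  intro j' hj'
  exact hPA q hs hu hlen t ht j' (by omega)

/-! ### Ratio inequalities from the hypotheses on `f` -/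

section fprops
variable {f : ℝ → ℝ}
  (hf_nonneg : ∀ x ∈ Set.Icc (0:ℝ) 1, 0 ≤ f x)
  (hf_sym : ∀ x ∈ Set.Icc (0:ℝ) 1, f x = f (1 - x))
  (hf_mono : AntitoneOn (fun x => f x / x) (Set.Ioc (0:ℝ) 1))

include hf_nonneg hf_mono in
lemma ratio_le {a b : ℝ} (h0 : 0 ≤ a) (hab : a ≤ b) (hb : b ≤ 1) : a * f b ≤ b * f a := by
  rcases eq_or_lt_of_le h0 with rfl | ha
  · have : (0:ℝ) ≤ b * f 0 := mul_nonneg (by linarith) (hf_nonneg 0 (by constructor <;> norm_num))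
    simpa using this
  · have hb0 : 0 < b := lt_of_lt_of_le ha hab
    have := hf_mono (Set.mem_Ioc.mpr ⟨ha, by linarith⟩) (Set.mem_Ioc.mpr ⟨hb0, hb⟩) hab
    simp only at this
    rw [div_le_div_iff₀ hb0 ha] at this
    linarith

include hf_nonneg hf_sym hf_mono in
lemma ratio_le' {a b : ℝ} (h0 : 0 ≤ a) (hab : a ≤ b) (hb : b ≤ 1) :
    (1 - b) * f a ≤ (1 - a) * f b := by
  have key := ratio_le hf_nonneg hf_mono (a := 1 - b) (b := 1 - a)
    (by linarith) (by linarith) (by linarith)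
  rw [← hf_sym a ⟨h0, by linarith⟩, ← hf_sym b ⟨by linarith, hb⟩] at key
  exact key

end fprops

/-! ### Main steps -/

section main
variable {f : ℝ → ℝ}

lemma PD_of_PC (hf_sym : ∀ x ∈ Set.Icc (0:ℝ) 1, f x = f (1 - x))
    {N : ℕ} (hPC : PC f N) :
    ∀ r : List ℝ, r.Pairwise (· ≤ ·) → Unit01 r → r.length = N →
    ∀ ia ib u : ℕ, ia < ib → ib < N → u + 1 ≤ N → N ≤ ia + u + 2 →
    (1 - r.getD ia 0) * cost f (u+1) (r.eraseIdx ia)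
      - (1 - r.getD ib 0) * cost f (u+1) (r.eraseIdx ib)
      - (r.getD ib 0 - r.getD ia 0) * cost f u ((r.eraseIdx ib).eraseIdx ia)
    ≤ (1 - r.getD ia 0) * f (r.getD ib 0) - (1 - r.getD ib 0) * f (r.getD ia 0) := by
  intro r hs hu hlen ia ib u hab hibN huN hN2
  set a := r.getD ia 0 with haa
  set b := r.getD ib 0 with hbb
  have haI : a ∈ Set.Icc (0:ℝ) 1 := by
    obtain ⟨h0, h1⟩ := hu.getD (by omega : ia < r.length); exact ⟨h0, h1⟩
  have hbI : b ∈ Set.Icc (0:ℝ) 1 := by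
    obtain ⟨h0, h1⟩ := hu.getD (by omega : ib < r.length); exact ⟨h0, h1⟩
  have hq' : (flipL r).Pairwise (· ≤ ·) := flipL_sorted hs
  have hu' : Unit01 (flipL r) := flipL_unit01 hu
  have hlen' : (flipL r).length = N := by rw [flipL_length, hlen]
  have key := hPC (flipL r) hq' hu' hlen' (N-1-ib) (N-1-ia) (N-u-1)
    (by omega) (by omega) (by omega)
  -- identify the getD values
  have gb : (flipL r).getD (N-1-ia) 0 = 1 - a := by
    rw [← hlen, flipL_getD _ _ (by omega)]
    have : r.length - 1 - (r.length - 1 - ia) = ia := by omega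
    rw [this]
  have ga : (flipL r).getD (N-1-ib) 0 = 1 - b := by
    rw [← hlen, flipL_getD _ _ (by omega)]
    have : r.length - 1 - (r.length - 1 - ib) = ib := by omega
    rw [this]
  rw [ga, gb] at key
  -- identify the lists
  have l1 : (flipL r).eraseIdx (N-1-ia) = flipL (r.eraseIdx ia) := by
    rw [flipL_eraseIdx r ia (by omega), hlen]
  have l2 : (flipL r).eraseIdx (N-1-ib) = flipL (r.eraseIdx ib) := by
    rw [flipL_eraseIdx r ib (by omega), hlen]
  have l3 : ((flipL r).eraseIdx (N-1-ia)).eraseIdx (N-1-ib)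
      = flipL ((r.eraseIdx ib).eraseIdx ia) := by
    have hc := eraseIdx_comm' (flipL r) (N-1-ib) (N-2-ia) (by omega)
      (by rw [hlen']; omega)
    have h1 : N - 2 - ia + 1 = N - 1 - ia := by omega
    rw [h1] at hc
    rw [hc]
    rw [flipL_eraseIdx ((r.eraseIdx ib)) ia (by rw [length_eraseIdx' (by omega)]; omega)]
    rw [flipL_eraseIdx r ib (by omega), hlen, length_eraseIdx' (by rw [hlen]; omega), hlen]
    have hidx : N - 1 - 1 - ia = N - 2 - ia := by omega
    rw [hidx]
  rw [l3, l1, l2] at key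
  -- translate the costs via duality
  have d1 : cost f (u+1) (r.eraseIdx ia) = cost f (N-u-1) (flipL (r.eraseIdx ia)) := by
    have := cost_dual hf_sym _ (r.eraseIdx ia) le_rfl (hu.eraseIdx ia) (u+1)
    rw [length_eraseIdx' (by omega), hlen] at this
    have harith : N - 1 + 1 - (u+1) = N - u - 1 := by omega
    rw [harith] at this
    exact this
  have d2 : cost f (u+1) (r.eraseIdx ib) = cost f (N-u-1) (flipL (r.eraseIdx ib)) := by
    have := cost_dual hf_sym _ (r.eraseIdx ib) le_rfl (hu.eraseIdx ib) (u+1)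
    rw [length_eraseIdx' (by omega), hlen] at this
    have harith : N - 1 + 1 - (u+1) = N - u - 1 := by omega
    rw [harith] at this
    exact this
  have d3 : cost f u ((r.eraseIdx ib).eraseIdx ia)
      = cost f (N-u-1) (flipL ((r.eraseIdx ib).eraseIdx ia)) := by
    have := cost_dual hf_sym _ ((r.eraseIdx ib).eraseIdx ia) le_rfl
      ((hu.eraseIdx ib).eraseIdx ia) u
    rw [length_eraseIdx' (by rw [length_eraseIdx' (by omega)]; omega),
      length_eraseIdx' (by omega), hlen] at this
    have harith : N - 1 - 1 + 1 - u = N - u - 1 := by omega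
    rw [harith] at this
    exact this
  rw [← d1, ← d2, ← d3] at key
  rw [← hf_sym _ haI, ← hf_sym _ hbI] at key
  linarith

lemma stepC (hf_nonneg : ∀ x ∈ Set.Icc (0:ℝ) 1, 0 ≤ f x)
    (hf_sym : ∀ x ∈ Set.Icc (0:ℝ) 1, f x = f (1 - x))
    (hf_mono : AntitoneOn (fun x => f x / x) (Set.Ioc (0:ℝ) 1))
    (N : ℕ) (hA1 : PA f (N-1)) (hA2 : PA f (N-2)) (hC1 : PC f (N-1)) : PC f N := by
  intro r hs hu hlen ia ib θ hab hibN hibθ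
  have hN2 : 2 ≤ N := by omega
  have haI := hu.getD (show ia < r.length by omega)
  have hbI := hu.getD (show ib < r.length by omega)
  have hab' : r.getD ia 0 ≤ r.getD ib 0 := sorted_getD_mono hs (le_of_lt hab) (by omega)
  cases θ with
  | zero =>
    rw [cost_zero, cost_zero, cost_zero]
    have := ratio_le hf_nonneg hf_mono haI.1 hab' hbI.2
    linarith
  | succ t =>
  have lXa : (r.eraseIdx ib).length = N - 1 := by rw [length_eraseIdx' (by omega)]; omega
  have lXb : (r.eraseIdx ia).length = N - 1 := by rw [length_eraseIdx' (by omega)]; omega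
  have lX : ((r.eraseIdx ib).eraseIdx ia).length = N - 2 := by
    rw [length_eraseIdx' (by rw [lXa]; omega), lXa]; omega
  have sXa := sorted_eraseIdx hs ib
  have sXb := sorted_eraseIdx hs ia
  have uXa := hu.eraseIdx ib
  have uXb := hu.eraseIdx ia
  by_cases hbd : ib + (t+1) = N
  · -- boundary case: `b` sits at the optimal position of `r.eraseIdx ia`
    have hEb : cost f (t+1) (r.eraseIdx ia) = vAt f t (r.eraseIdx ia) (ib-1) := by
      have h0 := costA hA1 sXb uXb lXb (t := t) (by omega)
      have hidx : N - 1 - t - 1 = ib - 1 := by omega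
      rw [hidx] at h0; exact h0
    have hEa : cost f (t+1) (r.eraseIdx ib) ≤ vAt f t (r.eraseIdx ib) ia :=
      cost_le_vAt (by omega) (by omega)
    have g1 : (r.eraseIdx ia).getD (ib-1) 0 = r.getD ib 0 := by
      rw [getD_eraseIdx_ge (by omega) (by omega)]
      congr 1
      omega
    have A1 : (r.eraseIdx ia).eraseIdx (ib-1) = (r.eraseIdx ib).eraseIdx ia := by
      have hc := eraseIdx_comm' r ia (ib-1) (by omega) (by omega)
      have : ib - 1 + 1 = ib := by omega
      rw [this] at hc
      exact hc.symm
    have g2 : (r.eraseIdx ib).getD ia 0 = r.getD ia 0 :=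
      getD_eraseIdx_lt (by omega) (by omega)
    unfold vAt at hEb hEa
    rw [g1, A1] at hEb
    rw [g2] at hEa
    have hb0 : 0 ≤ r.getD ib 0 := hbI.1
    have hmul := mul_le_mul_of_nonneg_left hEa hb0
    rw [hEb]
    nlinarith [hmul]
  · -- interior case: the element at position `N-t-1` of `r` is optimal everywhere
    have hNt : ib + (t+1) < N := lt_of_le_of_ne hibθ hbd
    have hcI := hu.getD (show N-t-1 < r.length by omega)
    have hc0 : 0 ≤ r.getD (N-t-1) 0 := hcI.1
    have hc1 : r.getD (N-t-1) 0 ≤ 1 := hcI.2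
    -- the list with c removed
    have lr' : (r.eraseIdx (N-t-1)).length = N - 1 := by
      rw [length_eraseIdx' (by omega)]; omega
    have sr' := sorted_eraseIdx hs (N-t-1)
    have ur' := hu.eraseIdx (N-t-1)
    -- expansions
    have hEb : cost f (t+1) (r.eraseIdx ia) = vAt f t (r.eraseIdx ia) (N-t-2) := by
      have h0 := costA hA1 sXb uXb lXb (t := t) (by omega)
      have hidx : N - 1 - t - 1 = N-t-2 := by omega
      rw [hidx] at h0; exact h0
    have hEx : cost f (t+1) ((r.eraseIdx ib).eraseIdx ia)
        = vAt f t ((r.eraseIdx ib).eraseIdx ia) (N-t-3) := by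
      have h0 := costA hA2 (sorted_eraseIdx sXa ia) (uXa.eraseIdx ia) lX (t := t) (by omega)
      have hidx : N - 2 - t - 1 = N-t-3 := by omega
      rw [hidx] at h0; exact h0
    have hEa : cost f (t+1) (r.eraseIdx ib) ≤ vAt f t (r.eraseIdx ib) (N-t-2) :=
      cost_le_vAt (by omega) (by omega)
    -- getD identifications
    have g1 : (r.eraseIdx ia).getD (N-t-2) 0 = r.getD (N-t-1) 0 := by
      rw [getD_eraseIdx_ge (by omega) (by omega)]
      congr 1
      omega
    have g2 : (r.eraseIdx ib).getD (N-t-2) 0 = r.getD (N-t-1) 0 := by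
      rw [getD_eraseIdx_ge (by omega) (by omega)]
      congr 1
      omega
    have g3 : ((r.eraseIdx ib).eraseIdx ia).getD (N-t-3) 0 = r.getD (N-t-1) 0 := by
      rw [getD_eraseIdx_ge (by omega) (by rw [lXa]; omega)]
      have : N - t - 3 + 1 = N - t - 2 := by omega
      rw [this, g2]
    -- list identifications
    have A1 : (r.eraseIdx ia).eraseIdx (N-t-2) = (r.eraseIdx (N-t-1)).eraseIdx ia := by
      have hc := eraseIdx_comm' r ia (N-t-2) (by omega) (by omega)
      have : N - t - 2 + 1 = N - t - 1 := by omega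
      rw [this] at hc
      exact hc.symm
    have A2 : (r.eraseIdx ib).eraseIdx (N-t-2) = (r.eraseIdx (N-t-1)).eraseIdx ib := by
      have hc := eraseIdx_comm' r ib (N-t-2) (by omega) (by omega)
      have : N - t - 2 + 1 = N - t - 1 := by omega
      rw [this] at hc
      exact hc.symm
    have A3 : ((r.eraseIdx ib).eraseIdx ia).eraseIdx (N-t-3)
        = ((r.eraseIdx (N-t-1)).eraseIdx ib).eraseIdx ia := by
      have hc := eraseIdx_comm' (r.eraseIdx ib) ia (N-t-3) (by omega) (by rw [lXa]; omega)
      have : N - t - 3 + 1 = N - t - 2 := by omega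
      rw [this] at hc
      rw [← hc, A2]
    -- the inner exchange inequalities on r' = r.eraseIdx (N-t-1)
    have ga' : (r.eraseIdx (N-t-1)).getD ia 0 = r.getD ia 0 :=
      getD_eraseIdx_lt (by omega) (by omega)
    have gb' : (r.eraseIdx (N-t-1)).getD ib 0 = r.getD ib 0 :=
      getD_eraseIdx_lt (by omega) (by omega)
    have I1 := hC1 (r.eraseIdx (N-t-1)) sr' ur' lr' ia ib t hab (by omega) (by omega)
    have I2 := hC1 (r.eraseIdx (N-t-1)) sr' ur' lr' ia ib (t+1) hab (by omega) (by omega)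
    rw [ga', gb'] at I1 I2
    -- assemble
    unfold vAt at hEb hEx hEa
    rw [g1, A1] at hEb
    rw [g3, A3] at hEx
    rw [g2, A2] at hEa
    have hb0 : 0 ≤ r.getD ib 0 := hbI.1
    have hmul := mul_le_mul_of_nonneg_left hEa hb0
    have hI1 := mul_le_mul_of_nonneg_left I1 hc0
    have hI2 := mul_le_mul_of_nonneg_left I2 (by linarith : (0:ℝ) ≤ 1 - r.getD (N-t-1) 0)
    rw [hEb, hEx]
    nlinarith [hmul, hI1, hI2]

lemma stepA_right (hf_nonneg : ∀ x ∈ Set.Icc (0:ℝ) 1, 0 ≤ f x)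
    (hf_sym : ∀ x ∈ Set.Icc (0:ℝ) 1, f x = f (1 - x))
    (hf_mono : AntitoneOn (fun x => f x / x) (Set.Ioc (0:ℝ) 1))
    (n : ℕ) (hA1 : PA f (n-1)) (hA2 : PA f (n-2)) (hC1 : PC f (n-1)) :
    ∀ q : List ℝ, q.Pairwise (· ≤ ·) → Unit01 q → q.length = n →
    ∀ t : ℕ, t + 1 ≤ n → ∀ j : ℕ, n - t - 1 < j → j < n →
    vAt f t q (n - t - 1) ≤ vAt f t q j := by
  intro q hs hu hlen t ht j hsj hjn
  have ht1 : 1 ≤ t := by omega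
  have hn2 : 2 ≤ n := by omega
  obtain ⟨t', rfl⟩ : ∃ t'', t = t'' + 1 := ⟨t-1, by omega⟩
  have lqj : (q.eraseIdx j).length = n - 1 := by rw [length_eraseIdx' (by omega)]; omega
  have sqj := sorted_eraseIdx hs j
  have uqj := hu.eraseIdx j
  have hwI := hu.getD (show j < q.length by omega)
  by_cases hs0 : n - (t'+1) - 1 = 0
  · -- `θ = n` (AND-type) case
    have hidx0 : n - (t'+1) - 1 = 0 := hs0
    rw [hidx0]
    have lq0 : (q.eraseIdx 0).length = n - 1 := by rw [length_eraseIdx' (by omega)]; omega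
    have huI := hu.getD (show 0 < q.length by omega)
    have huw : q.getD 0 0 ≤ q.getD j 0 := sorted_getD_mono hs (by omega) (by omega)
    have z1 : cost f (t'+1+1) (q.eraseIdx 0) = 0 :=
      cost_eq_zero_of_lt (by rw [lq0]; omega)
    have z2 : cost f (t'+1+1) (q.eraseIdx j) = 0 :=
      cost_eq_zero_of_lt (by rw [lqj]; omega)
    have hEj : cost f (t'+1) (q.eraseIdx j) = vAt f t' (q.eraseIdx j) 0 := by
      have h0 := costA hA1 sqj uqj lqj (t := t') (by omega)
      have hidx : n - 1 - t' - 1 = 0 := by omega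
      rw [hidx] at h0; exact h0
    have hUb : cost f (t'+1) (q.eraseIdx 0) ≤ vAt f t' (q.eraseIdx 0) (j-1) :=
      cost_le_vAt (by omega) (by omega)
    have g1 : (q.eraseIdx j).getD 0 0 = q.getD 0 0 :=
      getD_eraseIdx_lt (by omega) (by omega)
    have g2 : (q.eraseIdx 0).getD (j-1) 0 = q.getD j 0 := by
      rw [getD_eraseIdx_ge (by omega) (by omega)]
      congr 1
      omega
    have L1 : (q.eraseIdx j).eraseIdx 0 = (q.eraseIdx 0).eraseIdx (j-1) := by
      have hc := eraseIdx_comm' q 0 (j-1) (by omega) (by omega)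
      have : j - 1 + 1 = j := by omega
      rw [this] at hc
      exact hc
    have hBnn : 0 ≤ cost f (t'+1) ((q.eraseIdx 0).eraseIdx (j-1)) :=
      cost_nonneg hf_nonneg _ _ _ le_rfl ((hu.eraseIdx 0).eraseIdx (j-1))
    have hratio := ratio_le' hf_nonneg hf_sym hf_mono huI.1 huw hwI.2
    unfold vAt at hEj hUb ⊢
    rw [g1, L1] at hEj
    rw [g2] at hUb
    rw [z1, z2, hEj]
    have hM1 := mul_le_mul_of_nonneg_left hUb huI.1
    nlinarith [hM1, hratio, hBnn, huw, huI.1, huI.2, hwI.1, hwI.2]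
  · -- interior case
    have hsge : 1 ≤ n - t' - 2 := by omega
    have hjge : n - t' - 1 ≤ j := by omega
    have hidx0 : n - (t'+1) - 1 = n - t' - 2 := by omega
    rw [hidx0]
    have huI := hu.getD (show n-t'-2 < q.length by omega)
    have hzI := hu.getD (show n-t'-3 < q.length by omega)
    have huw : q.getD (n-t'-2) 0 ≤ q.getD j 0 := sorted_getD_mono hs (by omega) (by omega)
    have lqs : (q.eraseIdx (n-t'-2)).length = n - 1 := by
      rw [length_eraseIdx' (by omega)]; omega
    have sqs := sorted_eraseIdx hs (n-t'-2)
    have uqs := hu.eraseIdx (n-t'-2)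
    -- expansions of the two branches of v_j
    have hEj1 : cost f (t'+1) (q.eraseIdx j) = vAt f t' (q.eraseIdx j) (n-t'-2) := by
      have h0 := costA hA1 sqj uqj lqj (t := t') (by omega)
      have hidx : n - 1 - t' - 1 = n-t'-2 := by omega
      rw [hidx] at h0; exact h0
    have hEj2 : cost f (t'+1+1) (q.eraseIdx j) = vAt f (t'+1) (q.eraseIdx j) (n-t'-3) := by
      have h0 := costA hA1 sqj uqj lqj (t := t'+1) (by omega)
      have hidx : n - 1 - (t'+1) - 1 = n-t'-3 := by omega
      rw [hidx] at h0; exact h0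
    -- upper bounds on the two branches of v_s
    have hUb1 : cost f (t'+1) (q.eraseIdx (n-t'-2)) ≤ vAt f t' (q.eraseIdx (n-t'-2)) (j-1) :=
      cost_le_vAt (by omega) (by omega)
    have hUb2 : cost f (t'+1+1) (q.eraseIdx (n-t'-2))
        ≤ vAt f (t'+1) (q.eraseIdx (n-t'-2)) (n-t'-3) :=
      cost_le_vAt (by omega) (by omega)
    -- getD identifications
    have g1 : (q.eraseIdx j).getD (n-t'-2) 0 = q.getD (n-t'-2) 0 :=
      getD_eraseIdx_lt (by omega) (by omega)
    have g2 : (q.eraseIdx j).getD (n-t'-3) 0 = q.getD (n-t'-3) 0 :=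
      getD_eraseIdx_lt (by omega) (by omega)
    have g3 : (q.eraseIdx (n-t'-2)).getD (j-1) 0 = q.getD j 0 := by
      rw [getD_eraseIdx_ge (by omega) (by omega)]
      congr 1
      omega
    have g4 : (q.eraseIdx (n-t'-2)).getD (n-t'-3) 0 = q.getD (n-t'-3) 0 :=
      getD_eraseIdx_lt (by omega) (by omega)
    -- list identifications
    have L1 : (q.eraseIdx j).eraseIdx (n-t'-2) = (q.eraseIdx (n-t'-2)).eraseIdx (j-1) := by
      have hc := eraseIdx_comm' q (n-t'-2) (j-1) (by omega) (by omega)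
      have : j - 1 + 1 = j := by omega
      rw [this] at hc
      exact hc
    have L2 : (q.eraseIdx j).eraseIdx (n-t'-3) = (q.eraseIdx (n-t'-3)).eraseIdx (j-1) := by
      have hc := eraseIdx_comm' q (n-t'-3) (j-1) (by omega) (by omega)
      have : j - 1 + 1 = j := by omega
      rw [this] at hc
      exact hc
    have L3 : (q.eraseIdx (n-t'-2)).eraseIdx (n-t'-3)
        = (q.eraseIdx (n-t'-3)).eraseIdx (n-t'-3) := by
      have hc := eraseIdx_comm' q (n-t'-3) (n-t'-3) (by omega) (by omega)
      have : n - t' - 3 + 1 = n - t' - 2 := by omega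
      rw [this] at hc
      exact hc
    have L4 : ((q.eraseIdx (n-t'-2)).eraseIdx (j-1)).eraseIdx (n-t'-3)
        = ((q.eraseIdx (n-t'-3)).eraseIdx (n-t'-3)).eraseIdx (j-2) := by
      have hc := eraseIdx_comm' (q.eraseIdx (n-t'-2)) (n-t'-3) (j-2) (by omega)
        (by rw [lqs]; omega)
      have : j - 2 + 1 = j - 1 := by omega
      rw [this] at hc
      rw [hc, L3]
    have L5 : ((q.eraseIdx (n-t'-3)).eraseIdx (j-1)).eraseIdx (n-t'-3)
        = ((q.eraseIdx (n-t'-3)).eraseIdx (n-t'-3)).eraseIdx (j-2) := by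
      have lq3 : (q.eraseIdx (n-t'-3)).length = n - 1 := by
        rw [length_eraseIdx' (by omega)]; omega
      have hc := eraseIdx_comm' (q.eraseIdx (n-t'-3)) (n-t'-3) (j-2) (by omega)
        (by rw [lq3]; omega)
      have : j - 2 + 1 = j - 1 := by omega
      rw [this] at hc
      rw [← hc]
    -- optimal expansion inside B
    have lB : ((q.eraseIdx (n-t'-2)).eraseIdx (j-1)).length = n - 2 := by
      rw [length_eraseIdx' (by rw [lqs]; omega), lqs]; omega
    have hOpt : cost f (t'+1) ((q.eraseIdx (n-t'-2)).eraseIdx (j-1))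
        = vAt f t' ((q.eraseIdx (n-t'-2)).eraseIdx (j-1)) (n-t'-3) := by
      have h0 := costA hA2 (sorted_eraseIdx sqs (j-1)) (uqs.eraseIdx (j-1)) lB
        (t := t') (by omega)
      have hidx : n - 2 - t' - 1 = n-t'-3 := by omega
      rw [hidx] at h0; exact h0
    have gB : ((q.eraseIdx (n-t'-2)).eraseIdx (j-1)).getD (n-t'-3) 0
        = q.getD (n-t'-3) 0 := by
      rw [getD_eraseIdx_lt (by omega) (by rw [lqs]; omega), g4]
    -- the two dual exchange inequalities
    have lq3 : (q.eraseIdx (n-t'-3)).length = n - 1 := by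
      rw [length_eraseIdx' (by omega)]; omega
    have sq3 := sorted_eraseIdx hs (n-t'-3)
    have uq3 := hu.eraseIdx (n-t'-3)
    have gD1 : (q.eraseIdx (n-t'-3)).getD (n-t'-3) 0 = q.getD (n-t'-2) 0 := by
      rw [getD_eraseIdx_ge (by omega) (by omega)]
      congr 1
      omega
    have gD2 : (q.eraseIdx (n-t'-3)).getD (j-1) 0 = q.getD j 0 := by
      rw [getD_eraseIdx_ge (by omega) (by omega)]
      congr 1
      omega
    have hPD := PD_of_PC hf_sym hC1 (q.eraseIdx (n-t'-3)) sq3 uq3 lq3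
    have PD1 := hPD (n-t'-3) (j-1) t' (by omega) (by omega) (by omega) (by omega)
    have PD2 := hPD (n-t'-3) (j-1) (t'+1) (by omega) (by omega) (by omega) (by omega)
    rw [gD1, gD2, L5] at PD1 PD2
    -- assembly
    have hratio := ratio_le' hf_nonneg hf_sym hf_mono huI.1 huw hwI.2
    unfold vAt at hEj1 hEj2 hUb1 hUb2 hOpt ⊢
    rw [g1, L1] at hEj1
    rw [g2, L2] at hEj2
    rw [g3] at hUb1
    rw [g4, L3] at hUb2
    rw [gB, L4] at hOpt
    rw [hOpt] at hUb1 hEj1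
    rw [hEj1, hEj2]
    have hM1 := mul_le_mul_of_nonneg_left hUb1 huI.1
    have hM2 := mul_le_mul_of_nonneg_left hUb2 (by linarith [huI.2] : (0:ℝ) ≤ 1 - q.getD (n-t'-2) 0)
    have hM3 := mul_le_mul_of_nonneg_left PD1 hzI.1
    have hM4 := mul_le_mul_of_nonneg_left PD2 (by linarith [hzI.2] : (0:ℝ) ≤ 1 - q.getD (n-t'-3) 0)
    linarith [hM1, hM2, hM3, hM4, hratio]

lemma vAt_dual (hf_sym : ∀ x ∈ Set.Icc (0:ℝ) 1, f x = f (1 - x))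
    {q : List ℝ} (hu : Unit01 q) {t j : ℕ} (ht : t + 1 ≤ q.length) (hj : j < q.length) :
    vAt f t q j = vAt f (q.length - t - 1) (flipL q) (q.length - 1 - j) := by
  set L := q.length with hL
  have ha : q.getD j 0 ∈ Set.Icc (0:ℝ) 1 := by
    obtain ⟨h0, h1⟩ := hu.getD hj; exact ⟨h0, h1⟩
  have hgd : (flipL q).getD (L - 1 - j) 0 = 1 - q.getD j 0 := by
    rw [flipL_getD _ _ (by omega)]
    congr 2
    omega
  have hlist : (flipL q).eraseIdx (L - 1 - j) = flipL (q.eraseIdx j) :=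
    (flipL_eraseIdx q j hj).symm
  have hlen' : (q.eraseIdx j).length = L - 1 := length_eraseIdx' hj
  have hu' : Unit01 (q.eraseIdx j) := hu.eraseIdx j
  have e1 : cost f (t+1) (q.eraseIdx j) = cost f (L - t - 1) (flipL (q.eraseIdx j)) := by
    have := cost_dual hf_sym (q.eraseIdx j).length (q.eraseIdx j) le_rfl hu' (t+1)
    rw [hlen'] at this
    have harith : L - 1 + 1 - (t+1) = L - t - 1 := by omega
    rw [harith] at this
    exact this
  have e2 : cost f t (q.eraseIdx j) = cost f (L - t) (flipL (q.eraseIdx j)) := by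
    have := cost_dual hf_sym (q.eraseIdx j).length (q.eraseIdx j) le_rfl hu' t
    rw [hlen'] at this
    have harith : L - 1 + 1 - t = L - t := by omega
    rw [harith] at this
    exact this
  have harith2 : L - t - 1 + 1 = L - t := by omega
  unfold vAt
  rw [hgd, hlist, harith2, ← e1, ← e2, ← hf_sym _ ha]
  ring

lemma stepA (hf_nonneg : ∀ x ∈ Set.Icc (0:ℝ) 1, 0 ≤ f x)
    (hf_sym : ∀ x ∈ Set.Icc (0:ℝ) 1, f x = f (1 - x))
    (hf_mono : AntitoneOn (fun x => f x / x) (Set.Ioc (0:ℝ) 1))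
    (n : ℕ) (hA1 : PA f (n-1)) (hA2 : PA f (n-2)) (hC1 : PC f (n-1)) : PA f n := by
  intro q hs hu hlen t ht j hj
  rcases lt_trichotomy j (n - t - 1) with hlt | heq | hgt
  · -- left case via duality
    have hq' : (flipL q).Pairwise (· ≤ ·) := flipL_sorted hs
    have hu' : Unit01 (flipL q) := flipL_unit01 hu
    have hlen' : (flipL q).length = n := by rw [flipL_length, hlen]
    have e1 := vAt_dual hf_sym hu (t := t) (j := j) (by omega) (by omega)
    have e2 := vAt_dual hf_sym hu (t := t) (j := n - t - 1) (by omega) (by omega)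
    rw [hlen] at e1 e2
    have key := stepA_right hf_nonneg hf_sym hf_mono n hA1 hA2 hC1 (flipL q) hq' hu' hlen'
      (n - t - 1) (by omega) (n - 1 - j) (by omega) (by omega)
    have hidx : n - (n - t - 1) - 1 = n - 1 - (n - t - 1) := by omega
    rw [hidx] at key
    rw [e1, e2]
    exact key
  · rw [heq]
  · exact stepA_right hf_nonneg hf_sym hf_mono n hA1 hA2 hC1 q hs hu hlen t ht j hgt hj

lemma mainPAPC (hf_nonneg : ∀ x ∈ Set.Icc (0:ℝ) 1, 0 ≤ f x)
    (hf_sym : ∀ x ∈ Set.Icc (0:ℝ) 1, f x = f (1 - x))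
    (hf_mono : AntitoneOn (fun x => f x / x) (Set.Ioc (0:ℝ) 1)) :
    ∀ n : ℕ, PA f n ∧ PC f n := by
  intro n
  induction n using Nat.strong_induction_on with
  | _ n ih =>
    rcases Nat.eq_zero_or_pos n with rfl | hn
    · constructor
      · intro q hs hu hlen t ht j hj; omega
      · intro r hs hu hlen ia ib θ h1 h2 h3; omega
    · have hA1 : PA f (n-1) := (ih (n-1) (by omega)).1
      have hA2 : PA f (n-2) := (ih (n-2) (by omega)).1
      have hC1 : PC f (n-1) := (ih (n-1) (by omega)).2
      exact ⟨stepA hf_nonneg hf_sym hf_mono n hA1 hA2 hC1,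
        stepC hf_nonneg hf_sym hf_mono n hA1 hA2 hC1⟩

end main

/-- Part (c) of the loaded induction hypothesis in Lemma 1:
the quantity `S²_{m,k,i}` is bounded by `p_{k+1} f(p_i) - p_i f(p_{k+1})`
for `1 ≤ i ≤ k ≤ m-1` (1-based indices). -/
theorem stmt_2 (f : ℝ → ℝ)
    (hf_nonneg : ∀ x ∈ Set.Icc (0:ℝ) 1, 0 ≤ f x)
    (hf_sym : ∀ x ∈ Set.Icc (0:ℝ) 1, f x = f (1 - x))
    (hf_mono : AntitoneOn (fun x => f x / x) (Set.Ioc (0:ℝ) 1))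
    (m : ℕ) (p : Fin m → ℝ)
    (hp0 : ∀ i, 0 ≤ p i) (hp1 : ∀ i, p i ≤ 1) (hsorted : Monotone p)
    (k i : ℕ) (hi1 : 1 ≤ i) (hik : i ≤ k) (hkm : k + 1 ≤ m) :
    (p ⟨i - 1, by omega⟩ - p ⟨k, by omega⟩) *
        cost f (m - k - 1) (((List.ofFn p).eraseIdx k).eraseIdx (i - 1))
      + p ⟨k, by omega⟩ * cost f (m - k - 1) ((List.ofFn p).eraseIdx k)
      - p ⟨i - 1, by omega⟩ * cost f (m - k - 1) ((List.ofFn p).eraseIdx (i - 1))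
    ≤ p ⟨k, by omega⟩ * f (p ⟨i - 1, by omega⟩)
      - p ⟨i - 1, by omega⟩ * f (p ⟨k, by omega⟩) := by
  have hPC : PC f m := (mainPAPC hf_nonneg hf_sym hf_mono m).2
  have hs : (List.ofFn p).Pairwise (· ≤ ·) := by
    exact List.sortedLE_iff_pairwise.mp (List.sortedLE_ofFn_iff.mpr hsorted)
  have hu : Unit01 (List.ofFn p) := by
    intro x hx
    rw [List.mem_ofFn] at hx
    obtain ⟨y, rfl⟩ := hx
    exact ⟨hp0 y, hp1 y⟩
  have key := hPC (List.ofFn p) hs hu (by simp) (i-1) k (m-k-1)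
    (by omega) (by omega) (by omega)
  have ga : (List.ofFn p).getD (i-1) 0 = p ⟨i-1, by omega⟩ := by
    rw [List.getD_eq_getElem _ _ (by simp; omega), List.getElem_ofFn]
  have gb : (List.ofFn p).getD k 0 = p ⟨k, by omega⟩ := by
    rw [List.getD_eq_getElem _ _ (by simp; omega), List.getElem_ofFn]
  rw [ga, gb] at key
  linarith
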